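/- Let D be a properly bounded difference operator of order d supported in [m₋, m₊] (so a_k^{m₋} ≠ 0 and a_k^{m₊} ≠ 0 for all k), and let ξ¹,…,ξᵈ be sequences in the kernel of D. Then the difference Wronskian W_k = det(ξʲ_{k+i-1})_{1≤i,j≤d} satisfies W_{k+1} = (-1)ᵈ · (a_{k-m₋}^{m₋} / a_{k-m₋}^{m₊}) · W_k for all k. -/

import Mathlib

/-- The difference Wronskian of `d` sequences in the kernel of a properly bounded
difference operator of order `d` supported in `[m, m + d]` satisfies
`W_{k+1} = (-1)^d (a_{k-m}^{m} / a_{k-m}^{m+d}) W_k`. -/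
theorem wronskian_recurrence (d : ℕ) (m : ℤ) (a : ℤ → ℤ → ℝ)
    (hlow : ∀ k, a k m ≠ 0) (hhigh : ∀ k, a k (m + d) ≠ 0)
    (ξ : Fin d → ℤ → ℝ)
    (hker : ∀ j : Fin d, ∀ k : ℤ,
      ∑ i ∈ Finset.range (d + 1), a k (m + i) * ξ j (k + m + i) = 0)
    (k : ℤ) :
    Matrix.det (Matrix.of fun i j : Fin d => ξ j (k + 1 + i)) =
      (-1) ^ d * (a (k - m) m / a (k - m) (m + d)) *
        Matrix.det (Matrix.of fun i j : Fin d => ξ j (k + i)) := by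
  cases d with
  | zero => simp [div_self (hlow (k - m))]
  | succ n =>
  set a' : ℕ → ℝ := fun i => a (k - m) (m + i) with ha'
  have ha2 : ∀ i : ℕ, a (k - m) (m + (i : ℤ)) = a' i := fun _ => rfl
  have hden : a' (n + 1) ≠ 0 := hhigh (k - m)
  set M : Matrix (Fin (n + 1)) (Fin (n + 1)) ℝ := Matrix.of fun i j => ξ j (k + i) with hM
  set c : Fin (n + 1) → ℝ := fun i => -(a' i / a' (n + 1)) with hc
  have key : ∀ j : Fin (n + 1), ξ j (k + ((n + 1 : ℕ) : ℤ)) = ∑ i : Fin (n + 1), c i * ξ j (k + i) := by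
    intro j
    have h := hker j (k - m)
    rw [Finset.sum_range_succ] at h
    have hrw : ∀ i : ℕ, k - m + m + (i : ℤ) = k + i := fun i => by ring
    simp only [hrw, ha2] at h
    have hterm : ∀ i : Fin (n + 1), c i * ξ j (k + (i : ℕ)) = -(a' i * ξ j (k + (i : ℕ))) / a' (n + 1) := by
      intro i; rw [hc]; field_simp
    calc ξ j (k + ((n + 1 : ℕ) : ℤ))
        = -(∑ x ∈ Finset.range (n + 1), a' x * ξ j (k + (x : ℤ))) / a' (n + 1) := by
          rw [eq_div_iff hden]; linarith
      _ = ∑ i : Fin (n + 1), c i * ξ j (k + (i : ℕ)) := by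
          rw [← Fin.sum_univ_eq_sum_range (fun x => a' x * ξ j (k + (x : ℤ))) (n + 1),
            ← Finset.sum_neg_distrib, Finset.sum_div]
          exact Finset.sum_congr rfl fun i _ => (hterm i).symm
  set B : Matrix (Fin (n + 1)) (Fin (n + 1)) ℝ := M.updateRow 0 (∑ i, c i • M i) with hB
  have hdetB : B.det = c 0 * M.det := Matrix.det_updateRow_sum M 0 c
  have hMB : (Matrix.of fun i j : Fin (n + 1) => ξ j (k + 1 + i))
      = B.submatrix (finRotate (n + 1)) id := by
    ext i j
    simp only [Matrix.submatrix_apply, finRotate_succ_apply, id_eq, Matrix.of_apply]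
    by_cases hi : i = Fin.last n
    · subst hi
      have h0 : (Fin.last n + 1 : Fin (n + 1)) = 0 := by
        apply Fin.ext
        simp [Fin.add_def, Fin.last]
      rw [h0, hB, Matrix.updateRow_self]
      have hv : k + 1 + ((Fin.last n : Fin (n + 1)) : ℕ) = k + ((n + 1 : ℕ) : ℤ) := by
        simp [Fin.last]; ring
      rw [hv, key j]
      simp [Finset.sum_apply, hM]
    · have hlt : i < Fin.last n := lt_of_le_of_ne (Fin.le_last i) hi
      have hval : ((i + 1 : Fin (n + 1)) : ℕ) = (i : ℕ) + 1 := Fin.val_add_one_of_lt hlt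
      have hne : (i + 1 : Fin (n + 1)) ≠ 0 := by
        intro h
        rw [h] at hval
        simp at hval
      rw [hB, Matrix.updateRow_ne hne]
      show ξ j (k + 1 + (i : ℕ)) = ξ j (k + ((i + 1 : Fin (n + 1)) : ℕ))
      congr 1
      rw [hval]
      push_cast
      ring
  rw [hMB, Matrix.det_permute, sign_finRotate, hdetB]
  have hsign : ((((-1 : ℤˣ) ^ n : ℤˣ) : ℤ) : ℝ) = (-1 : ℝ) ^ n := by push_cast; ring
  rw [Nat.add_sub_cancel, hsign, hc]
  have e0 : a' ((0 : Fin (n + 1)) : ℕ) = a (k - m) m := by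
    show a (k - m) (m + (((0 : Fin (n + 1)) : ℕ) : ℤ)) = a (k - m) m
    norm_num
  have e1 : a' (n + 1) = a (k - m) (m + ((n + 1 : ℕ) : ℤ)) := rfl
  simp only [e0, e1]
  ring
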